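/- arXiv:2208.05677 — 5 statements merged into one kernel-verified Lean document; each statement's English description precedes it below -/
import Mathlib

section
/- The automorphism group of a finitely generated residually finite group contains no subgroup isomorphic to the additive group Q of rational numbers. -/
/-- A group is residually finite if every non-trivial element survives in some finite
quotient. -/
def ResiduallyFinite (G : Type*) [Group G] : Prop :=
  ∀ g : G, g ≠ 1 → ∃ (H : Type) (_ : Group H) (_ : Finite H) (φ : G →* H), φ g ≠ 1

universe u

/-- Conjugation of permutation groups by an equiv, as a monoid hom. -/
def permConjHom {α β : Type*} (e : α ≃ β) : Equiv.Perm α →* Equiv.Perm β where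
  toFun := e.permCongr
  map_one' := by ext x; simp
  map_mul' p q := by ext x; simp [Equiv.permCongr_def]

/-- Homs from a f.g. group to a finite monoid form a finite set. -/
lemma finite_monoidHom {G P : Type*} [Group G] [Monoid P] [Finite P]
    (hfg : Group.FG G) : Finite (G →* P) := by
  obtain ⟨S, hS⟩ := Group.fg_def.mp hfg
  apply Finite.of_injective (fun f : G →* P => (fun s : S => f s))
  intro f g h
  refine MonoidHom.eq_of_eqOn_dense hS ?_
  intro s hs
  exact congrFun h ⟨s, hs⟩

/-- A f.g. group has finitely many subgroups of a given index. -/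
lemma finite_subgroups_of_index {G : Type*} [Group G] (hfg : Group.FG G)
    (n : ℕ) (hn : n ≠ 0) : Finite {K : Subgroup G // K.index = n} := by
  have hfin : Finite (G →* Equiv.Perm (Fin n)) := finite_monoidHom hfg
  let F : {K : Subgroup G // K.index = n} → (G →* Equiv.Perm (Fin n)) × Fin n := fun K =>
    letI : Finite (G ⧸ K.1) := (Nat.card_ne_zero.mp (by
      show Nat.card (G ⧸ K.1) ≠ 0
      rw [← Subgroup.index, K.2]; exact hn)).2
    let e := Finite.equivFinOfCardEq (show Nat.card (G ⧸ K.1) = n from K.2)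
    ⟨(permConjHom e).comp (MulAction.toPermHom G (G ⧸ K.1)), e ((1:G) : G ⧸ K.1)⟩
  have key : ∀ (K : {K : Subgroup G // K.index = n}) (g : G),
      ((F K).1 g) (F K).2 = (F K).2 ↔ g ∈ K.1 := by
    intro K g
    letI : Finite (G ⧸ K.1) := (Nat.card_ne_zero.mp (by
      show Nat.card (G ⧸ K.1) ≠ 0
      rw [← Subgroup.index, K.2]; exact hn)).2
    show (permConjHom _ (MulAction.toPermHom G (G ⧸ K.1) g)) _ = _ ↔ _
    simp only [permConjHom, MonoidHom.coe_mk, OneHom.coe_mk, Equiv.permCongr_apply,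
      Equiv.symm_apply_apply, MulAction.toPermHom_apply, MulAction.toPerm_apply]
    rw [EmbeddingLike.apply_eq_iff_eq]
    have h1 : g • ((1:G) : G ⧸ K.1) = ((g : G) : G ⧸ K.1) := by
      rw [MulAction.Quotient.smul_mk, smul_eq_mul, mul_one]
    simp only [F, Equiv.symm_apply_apply]
    rw [h1, QuotientGroup.eq]
    simp [Subgroup.inv_mem_iff]
  apply Finite.of_injective F
  intro K₁ K₂ h
  ext g
  rw [← key K₁ g, ← key K₂ g, h]

/-- Baumslag: every nontrivial automorphism of a f.g. residually finite group
survives in a finite quotient of the automorphism group. -/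
lemma aut_residually_finite {G : Type u} [Group G] (hfg : Group.FG G)
    (hrf : ResiduallyFinite G) (φ : MulAut G) (hφ : φ ≠ 1) :
    ∃ (K : Type u) (_ : Group K) (_ : Finite K) (f : MulAut G →* K), f φ ≠ 1 := by
  -- find g moved by φ
  have hg : ∃ g : G, φ g ≠ g := by
    by_contra h
    push_neg at h
    exact hφ (MulEquiv.ext fun x => h x)
  obtain ⟨g, hg⟩ := hg
  have hx : g⁻¹ * φ g ≠ 1 := fun h => hg (inv_mul_eq_one.mp h).symm
  obtain ⟨H₀, _, _, ψ, hψ⟩ := hrf _ hx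
  -- N = ker ψ has finite index
  have hNfin : Finite (G ⧸ ψ.ker) := by
    have : Finite ψ.range := Subtype.finite
    exact Finite.of_equiv _ (QuotientGroup.quotientKerEquivRange ψ).toEquiv.symm
  set n := ψ.ker.index with hn_def
  have hn : n ≠ 0 := by
    have : Nat.card (G ⧸ ψ.ker) ≠ 0 := Nat.card_ne_zero.mpr ⟨⟨1⟩, hNfin⟩
    simpa [hn_def, Subgroup.index] using this
  haveI hfam : Finite {K : Subgroup G // K.index = n} := finite_subgroups_of_index hfg n hn
  set M : Subgroup G := ⨅ (K : {K : Subgroup G // K.index = n}), K.1 with hM_def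
  have hmemM : ∀ x, x ∈ M ↔ ∀ K : {K : Subgroup G // K.index = n}, x ∈ K.1 := by
    intro x; simp [hM_def, Subgroup.mem_iInf]
  -- M is invariant under all automorphisms
  have hstab : ∀ (e : G ≃* G) (x : G), x ∈ M → e x ∈ M := by
    intro e x hxM
    rw [hmemM]
    intro K
    have hc : (K.1.comap e.toMonoidHom).index = n := by
      rw [Subgroup.index_comap_of_surjective _ e.surjective, K.2]
    exact (hmemM x).mp hxM ⟨K.1.comap e.toMonoidHom, hc⟩
  have hmap : ∀ e : G ≃* G, M.map e.toMonoidHom = M := by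
    intro e
    apply le_antisymm
    · rw [Subgroup.map_le_iff_le_comap]
      intro x hx
      exact hstab e x hx
    · intro x hx
      exact ⟨e.symm x, hstab e.symm x hx, e.apply_symm_apply x⟩
  haveI hMnormal : M.Normal := by
    constructor
    intro a ha gg
    have := hstab (MulAut.conj gg) a ha
    simpa [MulAut.conj_apply] using this
  haveI hMfi : M.FiniteIndex := by
    apply Subgroup.finiteIndex_iInf
    intro K
    exact ⟨by rw [K.2]; exact hn⟩
  haveI : Finite (G ⧸ M) := M.finite_quotient_of_finiteIndex
  -- M is contained in ker ψ
  have hMle : M ≤ ψ.ker := iInf_le (fun K : {K : Subgroup G // K.index = n} => K.1) ⟨ψ.ker, rfl⟩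
  -- induced map on automorphism groups
  let f : MulAut G →* MulAut (G ⧸ M) :=
    { toFun := fun e => QuotientGroup.congr M M e (hmap e)
      map_one' := by
        ext q
        induction q using QuotientGroup.induction_on with
        | H x => rfl
      map_mul' := fun e₁ e₂ => by
        ext q
        induction q using QuotientGroup.induction_on with
        | H x => rfl }
  refine ⟨MulAut (G ⧸ M), inferInstance, Finite.of_injective _ DFunLike.coe_injective, f, ?_⟩
  intro hf1
  have : (f φ) ((g : G ⧸ M)) = (g : G ⧸ M) := by rw [hf1]; rfl
  have h2 : ((φ g : G) : G ⧸ M) = (g : G ⧸ M) := by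
    rw [← this]; rfl
  have h4 : g⁻¹ * φ g ∈ M := QuotientGroup.eq.mp h2.symm
  exact hψ (MonoidHom.mem_ker.mp (hMle h4))

/-- The automorphism group of a finitely generated residually finite group
has no subgroup isomorphic to the additive group `ℚ`. -/
theorem stmt6 {G : Type*} [Group G] (hfg : Group.FG G) (hrf : ResiduallyFinite G) :
    ∀ H : Subgroup (MulAut G), ¬ Nonempty (H ≃* Multiplicative ℚ) := by
  rintro H ⟨e⟩
  set φ : MulAut G := ((e.symm (Multiplicative.ofAdd (1:ℚ)) : H) : MulAut G) with hφ_def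
  have hφ : φ ≠ 1 := by
    intro h
    have h1 : e.symm (Multiplicative.ofAdd (1:ℚ)) = 1 := by
      apply Subtype.ext
      simpa [hφ_def] using h
    have h2 := congrArg e h1
    rw [MulEquiv.apply_symm_apply, show e 1 = 1 from map_one e] at h2
    have h3 : (1:ℚ) = 0 := by simpa using congrArg Multiplicative.toAdd h2
    norm_num at h3
  obtain ⟨K, _, _, f, hf⟩ := aut_residually_finite hfg hrf φ hφ
  let f' : Multiplicative ℚ →* K := (f.comp H.subtype).comp e.symm.toMonoidHom
  have htriv : ∀ q : Multiplicative ℚ, f' q = 1 := by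
    intro q
    have hm : ((Nat.card K : ℚ)) ≠ 0 :=
      Nat.cast_ne_zero.mpr Nat.card_pos.ne'
    have hq : q = (Multiplicative.ofAdd (q.toAdd / (Nat.card K : ℚ))) ^ (Nat.card K) := by
      rw [← ofAdd_nsmul, nsmul_eq_mul, mul_div_cancel₀ _ hm]
      simp
    rw [hq, map_pow, pow_card_eq_one']
  exact hf (htriv (Multiplicative.ofAdd (1:ℚ)))
end

section
/- Let G be a group whose center Z(G) contains an element of prime order p. Then there exists a discontinuous surjective group homomorphism from the topological group (∏_{n ∈ N} Z/pZ) × G (with the product of the product topology and the discrete topology) onto G with the discrete topology. -/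
/-- The topology on `(∏_{n ∈ ℕ} ℤ/pℤ) × G`: the product of the product topology on
`∏ ℤ/pℤ` (each factor discrete, i.e. with the `⊥` topology) and the given topology on
`G`. -/
def prodTopology (p : ℕ) (G : Type*) [TopologicalSpace G] :
    TopologicalSpace ((ℕ → Multiplicative (ZMod p)) × G) :=
  @instTopologicalSpaceProd _ _
    (@Pi.topologicalSpace ℕ (fun _ => Multiplicative (ZMod p)) (fun _ => ⊥))
    inferInstance

/-- If the center of `G` contains an element of prime order `p`, then there
is a discontinuous surjective group homomorphism `(∏_{n ∈ ℕ} ℤ/pℤ) × G → G`, where the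
domain carries the product topology (with each `ℤ/pℤ` discrete) and `G` is discrete. -/
theorem stmt12 {G : Type*} [Group G] [TopologicalSpace G] [DiscreteTopology G]
    (p : ℕ) (hp : p.Prime) (z : G) (hz : z ∈ Subgroup.center G) (hord : orderOf z = p) :
    ∃ φ : (ℕ → Multiplicative (ZMod p)) × G →* G,
      Function.Surjective φ ∧ ¬ @Continuous _ _ (prodTopology p G) _ φ := by
  haveI : Fact p.Prime := ⟨hp⟩
  haveI : NeZero p := ⟨hp.ne_zero⟩
  -- submodule of finitely supported functions
  let D : Submodule (ZMod p) (ℕ → ZMod p) :=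
  { carrier := {x | (Function.support x).Finite}
    add_mem' := fun hx hy => ((hx.union hy).subset (Function.support_add _ _))
    zero_mem' := by simp [Function.support_zero]
    smul_mem' := fun r x hx => hx.subset (fun i hi => by
      simp only [Function.mem_support] at hi ⊢
      intro h0; exact hi (by simp [h0])) }
  have hD : ∀ x : ℕ → ZMod p, (Function.support x).Finite → x ∈ D := fun x h => h
  let c : ℕ → ZMod p := fun _ => 1
  have hcD : c ∉ D := by
    intro h
    have hsupp : Function.support c = Set.univ := by
      ext i; simp [c, Function.mem_support]
    have : (Function.support c).Finite := h
    rw [hsupp] at this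
    exact Set.infinite_univ this
  have hQc : D.mkQ c ≠ 0 := by
    simpa [Submodule.mkQ_apply, Submodule.Quotient.mk_eq_zero] using hcD
  obtain ⟨f, hf⟩ : ∃ f : ((ℕ → ZMod p) ⧸ D) →ₗ[ZMod p] ZMod p, f (D.mkQ c) ≠ 0 := by
    let b := Module.Free.chooseBasis (ZMod p) ((ℕ → ZMod p) ⧸ D)
    obtain ⟨i, hi⟩ : ∃ i, b.repr (D.mkQ c) i ≠ 0 := by
      by_contra h; push_neg at h
      exact hQc (b.repr.map_eq_zero_iff.mp (Finsupp.ext h))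
    exact ⟨b.coord i, hi⟩
  let φ₁ : (ℕ → ZMod p) →ₗ[ZMod p] ZMod p := f ∘ₗ D.mkQ
  have hφ₁D : ∀ x ∈ D, φ₁ x = 0 := by
    intro x hx
    have : D.mkQ x = 0 := (Submodule.Quotient.mk_eq_zero D).mpr hx
    simp [φ₁, this]
  have hφ₁c : φ₁ c ≠ 0 := hf
  -- the key multiplicative facts
  have key : ∀ a b : ZMod p, z ^ (a + b).val = z ^ a.val * z ^ b.val := by
    intro a b
    rw [← pow_add, pow_eq_pow_iff_modEq, hord, ZMod.val_add]
    exact Nat.mod_modEq _ _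
  have hcomm : ∀ (n : ℕ) (g : G), g * z ^ n = z ^ n * g := by
    intro n g
    have h : Commute g z := Subgroup.mem_center_iff.mp hz g
    exact h.pow_right n
  have rearrange : ∀ (m n : ℕ) (g₁ g₂ : G),
      z ^ m * z ^ n * (g₁ * g₂) = z ^ m * g₁ * (z ^ n * g₂) := by
    intro m n g₁ g₂
    calc z ^ m * z ^ n * (g₁ * g₂) = z ^ m * (z ^ n * g₁) * g₂ := by group
    _ = z ^ m * (g₁ * z ^ n) * g₂ := by rw [hcomm]
    _ = z ^ m * g₁ * (z ^ n * g₂) := by group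
  have hφ₁0 : z ^ (φ₁ fun _ : ℕ => (0 : ZMod p)).val = 1 := by
    rw [show (fun _ : ℕ => (0 : ZMod p)) = (0 : ℕ → ZMod p) from rfl, map_zero,
      ZMod.val_zero, pow_zero]
  -- the homomorphism
  let φ : (ℕ → Multiplicative (ZMod p)) × G →* G :=
  { toFun := fun x => z ^ (φ₁ (fun i => Multiplicative.toAdd (x.1 i))).val * x.2
    map_one' := by
      show z ^ (φ₁ fun _ : ℕ => (0 : ZMod p)).val * 1 = 1
      rw [mul_one]; exact hφ₁0
    map_mul' := by
      rintro ⟨l₁, g₁⟩ ⟨l₂, g₂⟩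
      show z ^ (φ₁ fun i => Multiplicative.toAdd ((l₁ * l₂) i)).val * (g₁ * g₂)
          = z ^ (φ₁ fun i => Multiplicative.toAdd (l₁ i)).val * g₁ *
            (z ^ (φ₁ fun i => Multiplicative.toAdd (l₂ i)).val * g₂)
      rw [show (fun i => Multiplicative.toAdd ((l₁ * l₂) i))
          = (fun i => Multiplicative.toAdd (l₁ i)) + (fun i => Multiplicative.toAdd (l₂ i))
          from rfl, map_add, key, rearrange] }
  refine ⟨φ, ?_, ?_⟩
  · intro g
    refine ⟨(1, g), ?_⟩
    show z ^ (φ₁ fun _ : ℕ => (0 : ZMod p)).val * g = g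
    rw [hφ₁0, one_mul]
  · intro hcont
    letI tM : TopologicalSpace (Multiplicative (ZMod p)) := ⊥
    haveI : DiscreteTopology (Multiplicative (ZMod p)) := ⟨rfl⟩
    letI tP : TopologicalSpace (ℕ → Multiplicative (ZMod p)) := Pi.topologicalSpace
    have hcont' : Continuous (fun l : ℕ → Multiplicative (ZMod p) => φ (l, 1)) := by
      exact (hcont : @Continuous _ _ (@instTopologicalSpaceProd _ _ tP _) _ φ).comp
        (Continuous.prodMk continuous_id continuous_const)
    have hs : IsOpen ((fun l : ℕ → Multiplicative (ZMod p) => φ (l, 1)) ⁻¹' {1}) :=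
      hcont'.isOpen_preimage _ (isOpen_discrete _)
    have h1 : (1 : ℕ → Multiplicative (ZMod p)) ∈
        ((fun l : ℕ → Multiplicative (ZMod p) => φ (l, 1)) ⁻¹' {1}) := by
      show φ (1, 1) ∈ ({1} : Set G)
      exact map_one φ
    obtain ⟨I, u, hIu, hsub⟩ := (isOpen_pi_iff.mp hs) 1 h1
    set l' : ℕ → Multiplicative (ZMod p) :=
      fun i => if i ∈ I then 1 else Multiplicative.ofAdd 1 with hl'def
    have hl' : l' ∈ (I : Set ℕ).pi u := by
      intro i hi
      have : l' i = 1 := by simp [hl'def, Finset.mem_coe.mp hi]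
      rw [this]
      exact (hIu i (Finset.mem_coe.mp hi)).2
    have hφl' : φ (l', 1) = 1 := hsub hl'
    set a' : ℕ → ZMod p := fun i => Multiplicative.toAdd (l' i) with ha'def
    have hzpow : z ^ (φ₁ a').val = 1 := by
      have h : z ^ (φ₁ a').val * (1 : G) = 1 := hφl'
      simpa using h
    have hdvd : p ∣ (φ₁ a').val := by
      have h2 : orderOf z ∣ (φ₁ a').val := orderOf_dvd_of_pow_eq_one hzpow
      rwa [hord] at h2
    have hval0 : (φ₁ a').val = 0 := Nat.eq_zero_of_dvd_of_lt hdvd (ZMod.val_lt _)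
    have ha'0 : φ₁ a' = 0 := (ZMod.val_eq_zero _).mp hval0
    -- c - a' is finitely supported
    have hdmem : c - a' ∈ D := by
      apply hD
      apply Set.Finite.subset I.finite_toSet
      intro i hi
      simp only [Function.mem_support] at hi
      by_contra hiI
      apply hi
      have hiI' : i ∉ I := fun h => hiI (Finset.mem_coe.mpr h)
      have : a' i = 1 := by simp [ha'def, hl'def, hiI']
      simp [c, this]
    have hc0 : φ₁ c = 0 := by
      have h := hφ₁D _ hdmem
      rw [map_sub, ha'0, sub_zero] at h
      exact h
    exact hφ₁c hc0
end

section
/- Let n ≥ 2 and m ≥ 2, or n ≥ 1 and m ≥ 2, with G = Z^n × (Z/2Z)^m not isomorphic to Z × Z/2Z. Then the center of Aut(Z^n × (Z/2Z)^m) is the two-element group {id, ι}, where ι inverts each Z-factor and fixes the torsion part. -/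
lemma zmod2_add_self (c : ZMod 2) : c + c = 0 := by revert c; decide
lemma zmod2_neg (c : ZMod 2) : -c = c := by revert c; decide
lemma zmod2_or (c : ZMod 2) : c = 0 ∨ c = 1 := by revert c; decide

def transvec {R : Type*} [Ring R] {p : ℕ} (i k : Fin p) (h : i ≠ k) :
    (Fin p → R) ≃+ (Fin p → R) where
  toFun x := x + Pi.single i (x k)
  invFun x := x - Pi.single i (x k)
  left_inv x := by
    have hk : ((x + Pi.single i (x k) : Fin p → R)) k = x k := by
      simp [Pi.single_eq_of_ne (Ne.symm h)]
    simp only [hk]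
    abel
  right_inv x := by
    have hk : ((x - Pi.single i (x k) : Fin p → R)) k = x k := by
      simp [Pi.single_eq_of_ne (Ne.symm h)]
    simp only [hk]
    abel
  map_add' x y := by
    simp only [Pi.add_apply, Pi.single_add]
    abel

@[simp] lemma transvec_apply {R : Type*} [Ring R] {p : ℕ} (i k : Fin p) (h : i ≠ k) (x : Fin p → R) :
    transvec i k h x = x + Pi.single i (x k) := rfl

def shear {n m : ℕ} (i : Fin n) (j : Fin m) :
    ((Fin n → ℤ) × (Fin m → ZMod 2)) ≃+ ((Fin n → ℤ) × (Fin m → ZMod 2)) where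
  toFun g := (g.1, g.2 + Pi.single j ((g.1 i : ℤ) : ZMod 2))
  invFun g := (g.1, g.2 + Pi.single j ((g.1 i : ℤ) : ZMod 2))
  left_inv g := by
    refine Prod.ext rfl ?_
    simp only
    rw [add_assoc, ← Pi.single_add, zmod2_add_self, Pi.single_zero, add_zero]
  right_inv g := by
    refine Prod.ext rfl ?_
    simp only
    rw [add_assoc, ← Pi.single_add, zmod2_add_self, Pi.single_zero, add_zero]
  map_add' g h := by
    refine Prod.ext rfl ?_
    simp only [Prod.fst_add, Prod.snd_add, Pi.add_apply, Int.cast_add, Pi.single_add]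
    abel

@[simp] lemma shear_apply {n m : ℕ} (i : Fin n) (j : Fin m) (g) :
    shear i j g = (g.1, g.2 + Pi.single j ((g.1 i : ℤ) : ZMod 2)) := rfl

@[simp] lemma prodCongr_apply' {M N M' N' : Type*} [AddZeroClass M] [AddZeroClass N]
    [AddZeroClass M'] [AddZeroClass N'] (f : M ≃+ M') (g : N ≃+ N') (p : M × N) :
    (AddEquiv.prodCongr f g) p = (f p.1, g p.2) := rfl


/-- For `G = ℤⁿ × (ℤ/2ℤ)ᵐ` with `n, m ≥ 1` and `(n, m) ≠ (1, 1)`, the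
center of `Aut(G)` is the two-element group `{id, ι}`, where `ι` inverts the `ℤⁿ`-factor
and fixes the torsion part. -/
theorem stmt16 (n m : ℕ) (hn : 1 ≤ n) (hm : 1 ≤ m) (hnm : ¬(n = 1 ∧ m = 1))
    (ι : AddAut ((Fin n → ℤ) × (Fin m → ZMod 2)))
    (hι : ∀ (x : Fin n → ℤ) (t : Fin m → ZMod 2), ι (x, t) = (-x, t)) :
    (AddSubgroup.center (AddAut ((Fin n → ℤ) × (Fin m → ZMod 2))) :
      Set (AddAut ((Fin n → ℤ) × (Fin m → ZMod 2)))) = {0, ι} := by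
  have hioneg : ∀ g : (Fin n → ℤ) × (Fin m → ZMod 2), ι g = -g := by
    rintro ⟨x, t⟩
    rw [hι]
    refine Prod.ext rfl ?_
    funext j
    simp [zmod2_neg]
  ext z
  simp only [SetLike.mem_coe, Set.mem_insert_iff, Set.mem_singleton_iff]
  constructor
  · intro hmem
    have hz : ∀ (f : AddAut ((Fin n → ℤ) × (Fin m → ZMod 2))) g, z (f g) = f (z g) := by
      intro f g
      have h := AddSubgroup.mem_center_iff.mp hmem f
      have h2 := DFunLike.congr_fun h g
      simpa [AddAut.mul_apply] using h2.symm
    have hD1 : ∀ t : Fin m → ZMod 2, (z (0, t)).1 = 0 := by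
      intro t
      have h0 : ((0, t) : (Fin n → ℤ) × (Fin m → ZMod 2)) + (0, t) = 0 := by
        refine Prod.ext (by simp) ?_
        funext j
        simp [zmod2_add_self]
      have h1 := map_add z (0, t) (0, t)
      rw [h0, map_zero] at h1
      have h2 : (z (0, t)).1 + (z (0, t)).1 = 0 := by
        have h3 := congrArg Prod.fst h1
        simpa using h3.symm
      funext i
      have h4 := congrFun h2 i
      simp only [Pi.add_apply, Pi.zero_apply] at h4 ⊢
      omega
    have hsplit : ∀ (x : Fin n → ℤ) (t : Fin m → ZMod 2),
        z (x, t) = z (x, 0) + z (0, t) := by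
      intro x t
      rw [← map_add, Prod.mk_add_mk, add_zero, zero_add]
    have hCm : 2 ≤ m → ∀ x : Fin n → ℤ, (z (x, 0)).2 = 0 := by
      intro hm2 x
      have hnt : Nontrivial (Fin m) :=
        ⟨⟨⟨0, by omega⟩, ⟨1, by omega⟩, by simp [Fin.ext_iff]⟩⟩
      funext k
      obtain ⟨j, hj⟩ := exists_ne k
      have h := hz ((AddEquiv.refl (Fin n → ℤ)).prodCongr (transvec j k hj)) (x, 0)
      simp only [prodCongr_apply', AddEquiv.refl_apply, transvec_apply] at h
      simp only [Pi.zero_apply, Pi.single_zero, add_zero] at h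
      have h2 := congrArg Prod.snd h
      simp only at h2
      have h3 := congrFun h2 j
      simp only [Pi.add_apply, Pi.single_eq_same] at h3
      have h4 := left_eq_add.mp h3
      simpa using h4
    have hE1 : ∀ i k : Fin n, i ≠ k →
        z (Pi.single i 1, 0) = (Pi.single i ((z (Pi.single k 1, 0)).1 k), 0) := by
      intro i k hik
      have h := hz ((transvec i k hik).prodCongr
        (AddEquiv.refl (Fin m → ZMod 2))) (Pi.single k 1, 0)
      simp only [prodCongr_apply', AddEquiv.refl_apply, transvec_apply] at h
      rw [Pi.single_eq_same] at h
      have hsum : ((Pi.single k 1 + Pi.single i 1 : Fin n → ℤ), (0 : Fin m → ZMod 2))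
          = (Pi.single k 1, 0) + (Pi.single i 1, 0) := by
        rw [Prod.mk_add_mk, add_zero]
      rw [hsum, map_add] at h
      have h5 : z (Pi.single i 1, 0)
          = ((z (Pi.single k 1, 0)).1 + Pi.single i ((z (Pi.single k 1, 0)).1 k),
             (z (Pi.single k 1, 0)).2) - z (Pi.single k 1, 0) := by
        rw [← h]; abel
      rw [h5]
      refine Prod.ext ?_ ?_
      · simp only [Prod.fst_sub]
        abel
      · simp only [Prod.snd_sub]
        abel
    obtain ⟨lam, hei⟩ : ∃ lam : ℤ, ∀ i : Fin n,
        z (Pi.single i 1, 0) = (Pi.single i lam, 0) := by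
      rcases Nat.lt_or_ge n 2 with h1 | hn2
      · have hn1 : n = 1 := by omega
        have hm2 : 2 ≤ m := by
          rcases Nat.lt_or_ge m 2 with h2 | h2
          · exact absurd ⟨hn1, by omega⟩ hnm
          · exact h2
        refine ⟨(z (Pi.single (⟨0, by omega⟩ : Fin n) 1, 0)).1 ⟨0, by omega⟩, ?_⟩
        intro i
        have hi : i = (⟨0, by omega⟩ : Fin n) := Fin.ext (by have := i.isLt; omega)
        rw [hi]
        refine Prod.ext ?_ (hCm hm2 _)
        funext k
        have hk : k = (⟨0, by omega⟩ : Fin n) := Fin.ext (by have := k.isLt; omega)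
        rw [hk]
        simp
      · have hnt : Nontrivial (Fin n) :=
          ⟨⟨⟨0, by omega⟩, ⟨1, by omega⟩, by simp [Fin.ext_iff]⟩⟩
        have hlam : ∀ i k : Fin n, (z (Pi.single i 1, 0)).1 i = (z (Pi.single k 1, 0)).1 k := by
          intro i k
          rcases eq_or_ne i k with rfl | hik
          · rfl
          · rw [hE1 i k hik]
            simp
        refine ⟨(z (Pi.single (⟨0, by omega⟩ : Fin n) 1, 0)).1 ⟨0, by omega⟩, ?_⟩
        intro i
        obtain ⟨k, hk⟩ := exists_ne i
        rw [hE1 i k (Ne.symm hk), hlam k ⟨0, by omega⟩]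
    have hx0 : ∀ x : Fin n → ℤ, z (x, 0) = (lam • x, 0) := by
      intro x
      have hxsum : ((x, 0) : (Fin n → ℤ) × (Fin m → ZMod 2))
          = ∑ i : Fin n, ((Pi.single i (x i) : Fin n → ℤ), (0 : Fin m → ZMod 2)) := by
        refine Prod.ext ?_ ?_
        · rw [Prod.fst_sum]
          simp [Finset.univ_sum_single]
        · rw [Prod.snd_sum]; simp
      rw [hxsum, map_sum]
      have hterm : ∀ i : Fin n,
          z ((Pi.single i (x i) : Fin n → ℤ), (0 : Fin m → ZMod 2))
            = (Pi.single i (lam * x i), 0) := by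
        intro i
        have h1 : ((Pi.single i (x i) : Fin n → ℤ), (0 : Fin m → ZMod 2))
            = x i • ((Pi.single i 1 : Fin n → ℤ), (0 : Fin m → ZMod 2)) := by
          refine Prod.ext ?_ (by simp)
          funext j
          rcases eq_or_ne j i with rfl | hj
          · simp
          · simp [Pi.single_eq_of_ne hj]
        rw [h1, map_zsmul, hei i]
        refine Prod.ext ?_ (by simp)
        funext j
        rcases eq_or_ne j i with rfl | hj
        · simp [mul_comm]
        · simp [Pi.single_eq_of_ne hj]
      rw [Finset.sum_congr rfl (fun i _ => hterm i)]
      refine Prod.ext ?_ ?_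
      · rw [Prod.fst_sum]
        calc (∑ i : Fin n, ((Pi.single i (lam * x i) : Fin n → ℤ),
                (0 : Fin m → ZMod 2)).1)
            = ∑ i : Fin n, Pi.single i ((lam • x) i) := by
              apply Finset.sum_congr rfl
              intro i _
              simp
          _ = lam • x := Finset.univ_sum_single _
      · rw [Prod.snd_sum]; simp
    have hlam_unit : lam = 1 ∨ lam = -1 := by
      haveI : NeZero n := ⟨by omega⟩
      set g0 := z.symm ((Pi.single (0 : Fin n) 1 : Fin n → ℤ), (0 : Fin m → ZMod 2)) with hg0
      have h : z (g0.1, g0.2) = ((Pi.single (0 : Fin n) 1 : Fin n → ℤ),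
          (0 : Fin m → ZMod 2)) := by
        rw [Prod.mk.eta]
        exact z.apply_symm_apply _
      rw [hsplit, hx0] at h
      have h5 := congrArg Prod.fst h
      simp only [Prod.fst_add] at h5
      rw [hD1, add_zero] at h5
      have h6 := congrFun h5 (0 : Fin n)
      rw [Pi.smul_apply, Pi.single_eq_same, smul_eq_mul] at h6
      exact Int.isUnit_iff.mp (IsUnit.of_mul_eq_one _ h6)
    have hcast : ((lam : ℤ) : ZMod 2) = 1 := by
      rcases hlam_unit with rfl | rfl
      · simp
      · rw [Int.cast_neg, Int.cast_one]
        decide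
    have hDj : ∀ j : Fin m, z (0, Pi.single j 1) = (0, Pi.single j 1) := by
      intro j
      haveI : NeZero n := ⟨by omega⟩
      have h := hz (shear (0 : Fin n) j)
        ((Pi.single (0 : Fin n) 1 : Fin n → ℤ), (0 : Fin m → ZMod 2))
      simp only [shear_apply] at h
      rw [Pi.single_eq_same] at h
      simp only [Int.cast_one, zero_add] at h
      rw [hei (0 : Fin n)] at h
      simp only [Pi.single_eq_same] at h
      rw [hcast] at h
      rw [hsplit, hei (0 : Fin n)] at h
      have h2 : (Pi.single (0 : Fin n) lam, (0 : Fin m → ZMod 2))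
            + ((0 : Fin n → ℤ), Pi.single j (1 : ZMod 2))
          = ((Pi.single (0 : Fin n) lam : Fin n → ℤ),
              (0 : Fin m → ZMod 2) + Pi.single j (1 : ZMod 2)) := by
        rw [Prod.mk_add_mk, add_zero]
      rw [← h2] at h
      exact add_left_cancel h
    have hDt : ∀ t : Fin m → ZMod 2, z (0, t) = (0, t) := by
      intro t
      have hts : (((0 : Fin n → ℤ), t) : (Fin n → ℤ) × (Fin m → ZMod 2))
          = ∑ j : Fin m, ((0 : Fin n → ℤ), (Pi.single j (t j) : Fin m → ZMod 2)) := by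
        refine Prod.ext ?_ ?_
        · rw [Prod.fst_sum]; simp
        · rw [Prod.snd_sum]; simp [Finset.univ_sum_single]
      rw [hts, map_sum]
      have hterm : ∀ j : Fin m,
          z ((0 : Fin n → ℤ), (Pi.single j (t j) : Fin m → ZMod 2))
            = (0, Pi.single j (t j)) := by
        intro j
        rcases zmod2_or (t j) with h0 | h1
        · rw [h0]
          simp [Prod.mk_zero_zero]
        · rw [h1]
          exact hDj j
      rw [Finset.sum_congr rfl (fun j _ => hterm j)]
    have hfinal : ∀ g : (Fin n → ℤ) × (Fin m → ZMod 2), z g = (lam • g.1, g.2) := by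
      rintro ⟨x, t⟩
      rw [hsplit, hx0, hDt, Prod.mk_add_mk, add_zero, zero_add]
    rcases hlam_unit with rfl | rfl
    · left
      ext g : 1
      rw [hfinal g, one_smul, Prod.mk.eta]
      simp
    · right
      ext g : 1
      rw [hfinal g, hioneg g]
      refine Prod.ext ?_ ?_
      · simp
      · funext j
        simp [zmod2_neg]
  · rintro (rfl | rfl)
    · exact AddSubgroup.zero_mem _
    · rw [AddSubgroup.mem_center_iff]
      intro f
      ext g : 1
      simp only [AddAut.mul_apply]
      rw [hioneg g, hioneg (f g), map_neg]
end

section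
/- Every torsion subgroup of GL_n(Z) is finite. -/
open Finset in
lemma entry_mul_dvd {n : ℕ} {d e : ℤ} {A B : Matrix (Fin n) (Fin n) ℤ}
    (hA : ∀ i j, d ∣ A i j) (hB : ∀ i j, e ∣ B i j) :
    ∀ i j, d * e ∣ (A * B) i j := by
  intro i j
  rw [Matrix.mul_apply]
  exact Finset.dvd_sum fun k _ => mul_dvd_mul (hA i k) (hB k j)

open Finset in
lemma entry_pow_dvd {n : ℕ} {v : ℕ} {N : Matrix (Fin n) (Fin n) ℤ}
    (hN : ∀ i j, (2:ℤ)^v ∣ N i j) {m : ℕ} (hm : 2 ≤ m) :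
    ∀ i j, (2:ℤ)^(2*v) ∣ (N ^ m) i j := by
  intro i j
  have h2 : N ^ m = N * N * N ^ (m - 2) := by
    rw [← pow_two, ← pow_add]
    congr 1
    omega
  rw [h2, Matrix.mul_apply]
  apply Finset.dvd_sum
  intro k _
  apply dvd_mul_of_dvd_left
  rw [two_mul, pow_add]
  exact entry_mul_dvd hN hN i k

open Finset in
lemma binom_expand {n p : ℕ} (N : Matrix (Fin n) (Fin n) ℤ) :
    (1 + N) ^ p = ∑ m ∈ Finset.range (p + 1), (p.choose m : ℤ) • N ^ m := by
  rw [add_comm, (Commute.one_right N).add_pow]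
  refine Finset.sum_congr rfl fun m _ => ?_
  rw [one_pow, mul_one]
  rw [zsmul_eq_mul, Int.cast_natCast]
  exact (Nat.commute_cast (N ^ m) (p.choose m))

open Finset in
lemma core_lemma {n p : ℕ} (hp : p.Prime) (N : Matrix (Fin n) (Fin n) ℤ)
    (h4 : ∀ i j, (4:ℤ) ∣ N i j) (hpow : (1 + N) ^ p = 1) : N = 0 := by
  by_contra hN
  have hex : ∃ i j, N i j ≠ 0 := by
    by_contra h
    push_neg at h
    exact hN (by ext i j; simp [h i j])
  obtain ⟨i0, j0, ha⟩ := hex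
  set P : ℕ → Prop := fun t => ∀ i j, (2:ℤ)^t ∣ N i j with hPdef
  have hP2 : P 2 := by
    intro i j
    have := h4 i j
    norm_num
    exact this
  set b := (N i0 j0).natAbs with hb
  have hbound : ∀ t, P t → t ≤ b := by
    intro t ht
    have h1 : ((2:ℤ)^t).natAbs ∣ b := Int.natAbs_dvd_natAbs.mpr (ht i0 j0)
    have h2 : (2:ℕ)^t ≤ b := by
      refine Nat.le_of_dvd (Int.natAbs_pos.mpr ha) ?_
      simpa [Int.natAbs_pow] using h1
    exact le_of_lt (lt_of_lt_of_le (Nat.lt_two_pow_self (n := t)) h2)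
  classical
  set v := Nat.findGreatest P b with hv
  have hPv : P v := Nat.findGreatest_spec (hbound 2 hP2) hP2
  have hv2 : 2 ≤ v := Nat.le_findGreatest (hbound 2 hP2) hP2
  have hnot : ¬ P (v+1) := fun h =>
    Nat.findGreatest_is_greatest (Nat.lt_succ_self v) (hbound _ h) h
  apply hnot
  intro i j
  -- entrywise binomial
  have E : ∑ m ∈ Finset.range (p + 1), (p.choose m : ℤ) • N ^ m = 1 := by
    rw [← binom_expand]; exact hpow
  have E' : ∑ m ∈ Finset.range (p + 1), (p.choose m : ℤ) * (N ^ m) i j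
      = (1 : Matrix (Fin n) (Fin n) ℤ) i j := by
    have := congrArg (fun A => A i j) E
    simp only [Matrix.sum_apply, Matrix.smul_apply, smul_eq_mul] at this
    exact this
  have hp2 : 2 ≤ p := hp.two_le
  have hsplit : ∑ m ∈ Finset.range (p + 1), (p.choose m : ℤ) * (N ^ m) i j
      = (1 : Matrix (Fin n) (Fin n) ℤ) i j + (p:ℤ) * N i j
        + ∑ m ∈ Finset.Ico 2 (p+1), (p.choose m : ℤ) * (N ^ m) i j := by
    rw [Finset.range_eq_Ico,
      ← Finset.sum_Ico_consecutive _ (Nat.zero_le 2) (by omega : 2 ≤ p + 1)]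
    congr 1
    have h01 : Finset.Ico 0 2 = ({0, 1} : Finset ℕ) := by decide
    rw [h01, Finset.sum_insert (by decide), Finset.sum_singleton]
    simp [Nat.choose_one_right]
  set S := ∑ m ∈ Finset.Ico 2 (p+1), (p.choose m : ℤ) * (N ^ m) i j with hS
  have hkey : (p:ℤ) * N i j = -S := by
    rw [hsplit] at E'
    linarith
  have hSdvd : (2:ℤ)^(2*v) ∣ S :=
    Finset.dvd_sum fun m hm =>
      Dvd.dvd.mul_left (entry_pow_dvd hPv (Finset.mem_Ico.mp hm).1 i j) _
  have hpn : (2:ℤ)^(2*v) ∣ (p:ℤ) * N i j := by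
    rw [hkey]; exact hSdvd.neg_right
  rcases eq_or_ne p 2 with hpe | hne
  · subst hpe
    have h2v : (2:ℤ)^(2*v) = 2 * 2^(2*v-1) := by
      rw [← pow_succ']
      congr 1
      omega
    rw [h2v] at hpn
    have hd : (2:ℤ)^(2*v-1) ∣ N i j := by
      have hpn' : (2:ℤ) * 2^(2*v-1) ∣ 2 * N i j := by push_cast at hpn; exact hpn
      exact (mul_dvd_mul_iff_left (two_ne_zero (α := ℤ))).mp hpn'
    exact dvd_trans (pow_dvd_pow 2 (by omega)) hd
  · have hc : IsCoprime ((2:ℤ)^(2*v)) (p:ℤ) := by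
      have hnc : Nat.Coprime (2^(2*v)) p :=
        Nat.Coprime.pow_left _ ((Nat.coprime_primes Nat.prime_two hp).mpr (Ne.symm hne))
      have := Nat.isCoprime_iff_coprime.mpr hnc
      push_cast at this
      exact this
    exact dvd_trans (pow_dvd_pow 2 (by omega)) (hc.dvd_of_dvd_mul_left hpn)

lemma ker_torsionfree (n : ℕ) (x : GL (Fin n) ℤ)
    (hx1 : Units.map ((Int.castRingHom (ZMod 4)).mapMatrix).toMonoidHom x = 1)
    (hfin : IsOfFinOrder x) : x = 1 := by
  by_contra hne
  have hk0 : orderOf x ≠ 0 := hfin.orderOf_pos.ne'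
  have hk1 : orderOf x ≠ 1 := fun h => hne (orderOf_eq_one_iff.mp h)
  obtain ⟨p, hp, hpd⟩ := Nat.exists_prime_and_dvd hk1
  set y := x ^ (orderOf x / p) with hy
  have hyo : orderOf y = p := orderOf_pow_orderOf_div hk0 hpd
  have hyp : y ^ p = 1 := by rw [← hyo]; exact pow_orderOf_eq_one y
  have hy1 : Units.map ((Int.castRingHom (ZMod 4)).mapMatrix).toMonoidHom y = 1 := by
    rw [hy, map_pow, hx1, one_pow]
  -- pass to matrices
  set M : Matrix (Fin n) (Fin n) ℤ := (y : Matrix (Fin n) (Fin n) ℤ) with hM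
  have hMp : M ^ p = 1 := by
    have := congrArg (Units.val) hyp
    rwa [Units.val_pow_eq_pow_val, Units.val_one] at this
  have h4 : ∀ i j, (4:ℤ) ∣ (M - 1) i j := by
    intro i j
    have := congrArg (Units.val) hy1
    have h2 : (Int.castRingHom (ZMod 4)).mapMatrix M = 1 := this
    have h3 : ((M i j : ℤ) : ZMod 4) = (1 : Matrix (Fin n) (Fin n) (ZMod 4)) i j := by
      rw [← h2]; rfl
    have h5 : (((M - 1) i j : ℤ) : ZMod 4) = 0 := by
      simp only [Matrix.sub_apply]
      push_cast
      rw [h3]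
      simp [Matrix.one_apply]
    have := (ZMod.intCast_zmod_eq_zero_iff_dvd _ 4).mp h5
    exact_mod_cast this
  have hcore : M - 1 = 0 := by
    apply core_lemma hp _ h4
    rw [add_comm, sub_add_cancel]
    exact hMp
  have hM1 : M = 1 := by rwa [sub_eq_zero] at hcore
  have : y = 1 := Units.ext hM1
  rw [this, orderOf_one] at hyo
  exact hp.one_lt.ne' hyo.symm

/-- Every torsion subgroup of `GLₙ(ℤ)` is finite. -/
theorem stmt17 (n : ℕ) (H : Subgroup (GL (Fin n) ℤ))
    (hH : ∀ x ∈ H, IsOfFinOrder x) : Finite H := by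
  let φ : GL (Fin n) ℤ →* GL (Fin n) (ZMod 4) :=
    Units.map ((Int.castRingHom (ZMod 4)).mapMatrix).toMonoidHom
  let f : H →* GL (Fin n) (ZMod 4) := φ.comp H.subtype
  have hinj : Function.Injective f := by
    rw [injective_iff_map_eq_one]
    intro a ha
    have h1 : (a : GL (Fin n) ℤ) = 1 := ker_torsionfree n a ha (hH a a.2)
    exact Subtype.ext h1
  exact Finite.of_injective f hinj
end

section
/- Let T be a finite abelian group whose exponent is odd (no element of order 2), and let G = Z^n × T with n ≥ 1. Then the restriction of the map ρ : Aut(G) → Aut(Z^n) × Aut(T) to the center of Aut(G) is injective. -/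
/-- A central automorphism of `ℤⁿ × T` sends `(x,0)` into the first factor. -/
lemma central_snd_eq_zero (n : ℕ) {T : Type*} [AddCommGroup T]
    (hT : ∀ t : T, t + t = 0 → t = 0)
    (f : AddAut ((Fin n → ℤ) × T))
    (hf : f ∈ AddSubgroup.center (AddAut ((Fin n → ℤ) × T)))
    (x : Fin n → ℤ) : (f (x, 0)).2 = 0 := by
  set ι : AddAut ((Fin n → ℤ) × T) :=
    AddEquiv.prodCongr (AddEquiv.neg (Fin n → ℤ)) (AddEquiv.refl T) with hι
  have hιapp : ∀ p : (Fin n → ℤ) × T, ι p = (-p.1, p.2) := fun p => rfl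
  have hcomm : ι + f = f + ι := AddSubgroup.mem_center_iff.mp hf ι
  have h1 : (ι + f) (x, 0) = (f + ι) (x, 0) := by rw [hcomm]
  have h2 : ι (f (x, 0)) = f (-x, 0) := by
    simpa [AddAut.add_apply, hιapp] using h1
  have h3 : f (-x, 0) = - f (x, 0) := by
    have : ((-x, 0) : (Fin n → ℤ) × T) = -(x, 0) := by simp
    rw [this, map_neg]
  have hsnd : (f (x, 0)).2 = -(f (x, 0)).2 := by
    have := congrArg Prod.snd (h2.trans h3)
    simpa [hιapp] using this
  exact hT _ (by nth_rewrite 2 [hsnd]; simp)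

/-- For `G = ℤⁿ × T` with `n ≥ 1` and `T` finite abelian with no element of
order 2, the homomorphism `ρ : Aut(G) → Aut(ℤⁿ) × Aut(T)` (induced by the characteristic
torsion subgroup) restricted to the center of `Aut(G)` is injective. -/
theorem stmt18 (n : ℕ) (hn : 1 ≤ n) {T : Type*} [AddCommGroup T] [Finite T]
    (hT : ∀ t : T, t + t = 0 → t = 0)
    (ρ : AddAut ((Fin n → ℤ) × T) →+ AddAut (Fin n → ℤ) × AddAut T)
    (hρ : ∀ f : AddAut ((Fin n → ℤ) × T),
      (∀ t : T, f (0, t) = (0, (ρ f).2 t)) ∧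
      (∀ x : Fin n → ℤ, (f (x, 0)).1 = (ρ f).1 x)) :
    Set.InjOn ρ (AddSubgroup.center (AddAut ((Fin n → ℤ) × T))) := by
  have key : ∀ f ∈ AddSubgroup.center (AddAut ((Fin n → ℤ) × T)),
      ∀ p : (Fin n → ℤ) × T, f p = ((ρ f).1 p.1, (ρ f).2 p.2) := by
    intro f hf p
    obtain ⟨x, t⟩ := p
    have hsplit : ((x, t) : (Fin n → ℤ) × T) = (x, 0) + (0, t) := by simp
    rw [hsplit, map_add, (hρ f).1 t]
    have h1 : (f (x, 0)).1 = (ρ f).1 x := (hρ f).2 x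
    have h2 : (f (x, 0)).2 = 0 := central_snd_eq_zero n hT f hf x
    have : f (x, 0) = ((ρ f).1 x, 0) := Prod.ext h1 h2
    rw [this]
    simp
  intro f hf g hg hfg
  apply AddEquiv.ext
  intro p
  rw [key f hf p, key g hg p, hfg]
end
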